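/- Chain of inclusions: in the abstract ER setting with monotone operators F_h ⊆ F on equivalence relations over a finite set S, if the set of solutions is nonempty then LB ⊆ CM ⊆ PM ⊆ UB, where LB is the least equivalence relation closed under F_h, UB the least equivalence relation closed under F, and solutions are candidate solutions (built from F) satisfying F_h(E) ⊆ E and an arbitrary downward-irrelevant constraint predicate. -/

import Mathlib

/-- `E` is an equivalence relation on the set `S`, viewed as a set of pairs. -/
def IsEquivOn {α : Type*} (S : Set α) (E : Set (α × α)) : Prop :=
  E ⊆ S ×ˢ S ∧ (∀ x ∈ S, (x, x) ∈ E) ∧ (∀ x y, (x, y) ∈ E → (y, x) ∈ E) ∧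
    (∀ x y z, (x, y) ∈ E → (y, z) ∈ E → (x, z) ∈ E)

/-- `eqRel P S` : the intersection of all equivalence relations on `S` containing `P`. -/
def eqRel {α : Type*} (P : Set (α × α)) (S : Set α) : Set (α × α) :=
  ⋂₀ {E | IsEquivOn S E ∧ P ⊆ E}

/-- Candidate solutions for the abstract ER system with rule operator `F`. -/
inductive Cand {α : Type*} (S : Set α) (F : Set (α × α) → Set (α × α)) :
    Set (α × α) → Prop
  | base : Cand S F (eqRel ∅ S)
  | step (E' : Set (α × α)) (a : α × α) (hE' : Cand S F E') (ha : a ∈ F E') (hna : a ∉ E') :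
      Cand S F (eqRel (insert a E') S)

lemma equiv_prod {α : Type*} (S : Set α) : IsEquivOn S (S ×ˢ S) := by
  refine ⟨subset_rfl, ?_, ?_, ?_⟩
  · intro x hx; exact ⟨hx, hx⟩
  · intro x y h; exact ⟨h.2, h.1⟩
  · intro x y z h1 h2; exact ⟨h1.1, h2.2⟩

lemma eqRel_subset {α : Type*} {P E : Set (α × α)} {S : Set α}
    (hE : IsEquivOn S E) (hP : P ⊆ E) : eqRel P S ⊆ E :=
  Set.sInter_subset_of_mem ⟨hE, hP⟩

lemma eqRel_equiv {α : Type*} {P : Set (α × α)} {S : Set α} (hP : P ⊆ S ×ˢ S) :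
    IsEquivOn S (eqRel P S) := by
  refine ⟨eqRel_subset (equiv_prod S) hP, ?_, ?_, ?_⟩
  · intro x hx
    exact Set.mem_sInter.2 fun E hE => hE.1.2.1 x hx
  · intro x y h
    exact Set.mem_sInter.2 fun E hE => hE.1.2.2.1 x y (Set.mem_sInter.1 h E hE)
  · intro x y z h1 h2
    exact Set.mem_sInter.2 fun E hE =>
      hE.1.2.2.2 x y z (Set.mem_sInter.1 h1 E hE) (Set.mem_sInter.1 h2 E hE)

lemma cand_equiv {α : Type*} {S : Set α} {F : Set (α × α) → Set (α × α)}
    (hrange : ∀ E : Set (α × α), F E ⊆ S ×ˢ S) {E : Set (α × α)} (h : Cand S F E) :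
    IsEquivOn S E := by
  induction h with
  | base => exact eqRel_equiv (Set.empty_subset _)
  | step E' a hE' ha hna ih =>
      exact eqRel_equiv (Set.insert_subset (hrange E' ha) ih.1)

lemma cand_sub_closed {α : Type*} {S : Set α} {F : Set (α × α) → Set (α × α)}
    (hFmono : ∀ E E' : Set (α × α), E ⊆ E' → F E ⊆ F E')
    {E : Set (α × α)} (h : Cand S F E) {E' : Set (α × α)}
    (hEq : IsEquivOn S E') (hCl : F E' ⊆ E') : E ⊆ E' := by
  induction h with
  | base => exact eqRel_subset hEq (Set.empty_subset _)
  | step E'' a hE'' ha hna ih =>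
      exact eqRel_subset hEq (Set.insert_subset (hCl (hFmono E'' E' ih ha)) ih)

/-- Chain of inclusions `LB ⊆ CM ⊆ PM ⊆ UB`, where solutions are candidate solutions
(built from `F`) satisfying the hard rules `Fh` and an arbitrary constraint predicate. -/
theorem lb_cm_pm_ub {α : Type*} (S : Set α) (hS : S.Finite)
    (Fh F : Set (α × α) → Set (α × α))
    (hsub : ∀ E : Set (α × α), Fh E ⊆ F E)
    (hFhmono : ∀ E E' : Set (α × α), E ⊆ E' → Fh E ⊆ Fh E')
    (hFmono : ∀ E E' : Set (α × α), E ⊆ E' → F E ⊆ F E')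
    (hrange : ∀ E : Set (α × α), F E ⊆ S ×ˢ S)
    (C : Set (α × α) → Prop)
    (Sol : Set (Set (α × α)))
    (hSolDef : Sol = {E | Cand S F E ∧ Fh E ⊆ E ∧ C E})
    (hne : Sol.Nonempty) :
    (⋂₀ {E' | IsEquivOn S E' ∧ Fh E' ⊆ E'}) ⊆
        (⋂₀ {M | M ∈ Sol ∧ ∀ E' ∈ Sol, ¬ M ⊂ E'}) ∧
      (⋂₀ {M | M ∈ Sol ∧ ∀ E' ∈ Sol, ¬ M ⊂ E'}) ⊆
        (⋃₀ {M | M ∈ Sol ∧ ∀ E' ∈ Sol, ¬ M ⊂ E'}) ∧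
      (⋃₀ {M | M ∈ Sol ∧ ∀ E' ∈ Sol, ¬ M ⊂ E'}) ⊆
        ⋂₀ {E' | IsEquivOn S E' ∧ F E' ⊆ E'} := by
  have hSolCand : ∀ M ∈ Sol, Cand S F M := by
    intro M hM; rw [hSolDef] at hM; exact hM.1
  have hSolFh : ∀ M ∈ Sol, Fh M ⊆ M := by
    intro M hM; rw [hSolDef] at hM; exact hM.2.1
  refine ⟨?_, ?_, ?_⟩
  · -- LB ⊆ CM
    intro x hx
    refine Set.mem_sInter.2 fun M hM => ?_
    exact Set.mem_sInter.1 hx M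
      ⟨cand_equiv hrange (hSolCand M hM.1), hSolFh M hM.1⟩
  · -- CM ⊆ PM : there exists a maximal solution
    have hSolFin : Sol.Finite := by
      apply Set.Finite.subset (hS.prod hS).finite_subsets
      intro M hM
      exact (cand_equiv hrange (hSolCand M hM)).1
    obtain ⟨M, hM, hmax⟩ : ∃ M ∈ Sol, ∀ E' ∈ Sol, id M ≤ id E' → id M = id E' := by
      obtain ⟨M, hM, hmax⟩ := hSolFin.exists_maximal hne
      exact ⟨M, hM, fun E' hE' h => le_antisymm h (hmax hE' h)⟩
    have hMmax : M ∈ {M | M ∈ Sol ∧ ∀ E' ∈ Sol, ¬ M ⊂ E'} := by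
      refine ⟨hM, fun E' hE' hss => hss.ne (hmax E' hE' hss.subset)⟩
    intro x hx
    exact Set.mem_sUnion.2 ⟨M, hMmax, Set.mem_sInter.1 hx M hMmax⟩
  · -- PM ⊆ UB
    intro x hx
    obtain ⟨M, hM, hxM⟩ := Set.mem_sUnion.1 hx
    refine Set.mem_sInter.2 fun E' hE' => ?_
    exact cand_sub_closed hFmono (hSolCand M hM.1) hE'.1 hE'.2 hxM
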